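/- arXiv:2605.02042 — 2 statements merged into one kernel-verified Lean document; each statement's English description precedes it below -/
import Mathlib

section
/- Let H be a separable infinite-dimensional complex Hilbert space and let {f_n}_{n=0}^∞ be a Bessel sequence in H, i.e., there is a constant C > 0 with ∑_{n=0}^∞ |⟨f, f_n⟩|² ≤ C‖f‖² for all f ∈ H. Then {f_n} is a CFC sequence (there exists a bounded linear operator B on H such that {B f_n} is a Parseval frame for H) if and only if there exist an infinite-dimensional linear subspace D ⊆ H and a constant A > 0 such that A‖f‖² ≤ ∑_{n=0}^∞ |⟨f, f_n⟩|² for every f ∈ D. -/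
open scoped ComplexInnerProductSpace ENNReal

lemma exists_hb_nat {X : Type*} [NormedAddCommGroup X] [InnerProductSpace ℂ X]
    [CompleteSpace X] [TopologicalSpace.SeparableSpace X]
    (h : ¬ FiniteDimensional ℂ X) : Nonempty (HilbertBasis ℕ ℂ X) := by
  obtain ⟨w, b, hb⟩ := exists_hilbertBasis ℂ X
  have hon : Orthonormal ℂ (Subtype.val : w → X) := hb ▸ b.orthonormal
  have hdense : (Submodule.span ℂ (Set.range (Subtype.val : w → X))).topologicalClosure = ⊤ := by
    have := b.dense_span
    rwa [hb] at this
  have hdist : ∀ i j : w, i ≠ j → (1 : ℝ) ≤ dist (i : X) (j : X) := by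
    intro i j hij
    have h2 : ‖(i : X) - (j : X)‖ ^ 2 = 2 := by
      rw [@norm_sub_sq ℂ, hon.2 hij]
      simp [hon.1 i, hon.1 j]
      norm_num
    have hnn : (0:ℝ) ≤ ‖(i : X) - (j : X)‖ := norm_nonneg _
    rw [dist_eq_norm]
    nlinarith
  haveI hcw : Countable w := by
    have hpw : (Set.univ : Set w).PairwiseDisjoint
        (fun x : w => Metric.ball (x : X) (1/2)) := by
      intro i _ j _ hij
      refine Metric.ball_disjoint_ball ?_
      have := hdist i j hij
      norm_num
      linarith
    have := hpw.countable_of_isOpen (fun i _ => Metric.isOpen_ball)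
      (fun i _ => Metric.nonempty_ball.2 (by norm_num))
    exact Set.countable_univ_iff.mp this
  haveI hiw : Infinite w := by
    by_contra hfin
    rw [not_infinite_iff_finite] at hfin
    have hwf : w.Finite := Set.toFinite w
    haveI : FiniteDimensional ℂ (Submodule.span ℂ w) := FiniteDimensional.span_of_finite ℂ hwf
    have hcl : IsClosed ((Submodule.span ℂ w : Submodule ℂ X) : Set X) :=
      Submodule.closed_of_finiteDimensional _
    have hspan_top : (Submodule.span ℂ w : Submodule ℂ X) = ⊤ := by
      have : (Submodule.span ℂ w).topologicalClosure = Submodule.span ℂ w :=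
        le_antisymm (fun x hx => by
          have := hcl.closure_subset_iff.2 (subset_refl _)
          exact this hx) (Submodule.le_topologicalClosure _)
      rw [← this]
      simpa [Subtype.range_coe] using hdense
    apply h
    have : FiniteDimensional ℂ (⊤ : Submodule ℂ X) := hspan_top ▸ inferInstance
    exact Submodule.topEquiv.finiteDimensional
  obtain ⟨d⟩ : Nonempty (Denumerable w) :=
    nonempty_denumerable_iff.2 ⟨inferInstance, inferInstance⟩
  let e : ℕ ≃ w := (Denumerable.eqv w).symm
  have hcomp : Orthonormal ℂ ((Subtype.val : w → X) ∘ e) := hon.comp e e.injective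
  refine ⟨HilbertBasis.mk hcomp ?_⟩
  rw [Set.range_comp, e.surjective.range_eq, Set.image_univ, Subtype.range_coe] at *
  rw [hdense]

/-- For a Bessel sequence `{f_n}` in `H`, `{f_n}` is a CFC sequence iff there
exist an infinite-dimensional subspace `D ⊆ H` and `A > 0` with
`A‖f‖² ≤ ∑ |⟨f, f_n⟩|²` for all `f ∈ D`. -/
theorem stmt5 {H : Type*} [NormedAddCommGroup H] [InnerProductSpace ℂ H]
    [CompleteSpace H] [TopologicalSpace.SeparableSpace H]
    (hH : ¬ FiniteDimensional ℂ H) (fseq : ℕ → H)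
    (C : ℝ) (hC : 0 < C)
    (hBessel : ∀ f : H, Summable (fun n => ‖⟪f, fseq n⟫‖ ^ 2) ∧
      ∑' n, ‖⟪f, fseq n⟫‖ ^ 2 ≤ C * ‖f‖ ^ 2) :
    (∃ B : H →L[ℂ] H, ∀ f : H, HasSum (fun n => ‖⟪f, B (fseq n)⟫‖ ^ 2) (‖f‖ ^ 2)) ↔
      ∃ D : Submodule ℂ H, ¬ FiniteDimensional ℂ D ∧
        ∃ A : ℝ, 0 < A ∧ ∀ f ∈ D, A * ‖f‖ ^ 2 ≤ ∑' n, ‖⟪f, fseq n⟫‖ ^ 2 := by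
  constructor
  · -- Forward direction
    rintro ⟨B, hB⟩
    set Bd := ContinuousLinearMap.adjoint B with hBddef
    have hkey : ∀ f : H, HasSum (fun n => ‖⟪Bd f, fseq n⟫‖ ^ 2) (‖f‖ ^ 2) := by
      intro f
      have h0 := hB f
      have : (fun n => ‖⟪f, B (fseq n)⟫‖ ^ 2) = (fun n => ‖⟪Bd f, fseq n⟫‖ ^ 2) := by
        funext n
        rw [← ContinuousLinearMap.adjoint_inner_left]
      rwa [this] at h0
    have htsum : ∀ f : H, ∑' n, ‖⟪Bd f, fseq n⟫‖ ^ 2 = ‖f‖ ^ 2 := fun f => (hkey f).tsum_eq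
    have hBdzero : ∀ z : H, Bd z = 0 → z = 0 := by
      intro z hz
      have h1 := htsum z
      rw [hz] at h1
      simp only [inner_zero_left, norm_zero] at h1
      simp only [ne_eq, OfNat.ofNat_ne_zero, not_false_eq_true, zero_pow, tsum_zero] at h1
      have := h1.symm
      rw [pow_eq_zero_iff (by norm_num)] at this
      exact norm_eq_zero.mp this
    have hBdinj : Function.Injective Bd := by
      intro x y hxy
      have := hBdzero (x - y) (by rw [map_sub, hxy, sub_self])
      exact sub_eq_zero.mp this
    haveI : Nontrivial H := by
      by_contra hnt
      rw [not_nontrivial_iff_subsingleton] at hnt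
      exact hH (Module.Finite.of_basis (Module.Basis.empty H (ι := Fin 0)))
    obtain ⟨f₀, hf₀⟩ := exists_ne (0 : H)
    have hBdpos : 0 < ‖Bd‖ := by
      rcases (norm_nonneg Bd).lt_or_eq with h | h
      · exact h
      · exfalso
        have hBd0 : Bd = 0 := by
          rw [← ContinuousLinearMap.opNorm_zero_iff]
          exact h.symm
        exact hf₀ (hBdzero f₀ (by rw [hBd0]; rfl))
    refine ⟨LinearMap.range (Bd : H →ₗ[ℂ] H), ?_, (‖Bd‖ ^ 2)⁻¹, by positivity, ?_⟩
    · intro hfd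
      apply hH
      exact FiniteDimensional.of_injective ((Bd : H →ₗ[ℂ] H).rangeRestrict)
        (fun x y hxy => hBdinj (Subtype.ext_iff.mp hxy))
    · rintro g hg
      obtain ⟨f, rfl⟩ := hg
      have h1 := htsum f
      have h2 : ‖Bd f‖ ≤ ‖Bd‖ * ‖f‖ := Bd.le_opNorm f
      have h3 : ‖Bd f‖ ^ 2 ≤ ‖Bd‖ ^ 2 * ‖f‖ ^ 2 := by
        nlinarith [norm_nonneg (Bd f), norm_nonneg f, norm_nonneg Bd]
      simp only [ContinuousLinearMap.coe_coe]
      rw [h1]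
      rw [inv_mul_le_iff₀ (by positivity)]
      nlinarith
  · -- Backward direction
    rintro ⟨D, hDinf, A, hA, hD⟩
    -- the analysis operator
    have hmem : ∀ f : H, Memℓp (fun n => (⟪fseq n, f⟫ : ℂ)) 2 := by
      intro f
      apply memℓp_gen
      have h1 := (hBessel f).1
      have heq : (fun n => ‖(⟪fseq n, f⟫ : ℂ)‖ ^ (2:ℝ≥0∞).toReal) =
          fun n => ‖⟪f, fseq n⟫‖ ^ 2 := by
        funext n
        rw [← norm_inner_symm]
        norm_num
      rw [heq]
      exact h1
    let Tlin : H →ₗ[ℂ] (lp (fun _ : ℕ => ℂ) 2) :=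
      { toFun := fun f => ⟨fun n => ⟪fseq n, f⟫, hmem f⟩
        map_add' := fun x y => by
          apply Subtype.ext
          funext n
          simp only [inner_add_right]
          rfl
        map_smul' := fun c x => by
          apply Subtype.ext
          funext n
          simp only [inner_smul_right]
          rfl }
    have hTapp : ∀ (f : H) (n : ℕ), (Tlin f : ∀ _ : ℕ, ℂ) n = ⟪fseq n, f⟫ := fun f n => rfl
    have hTnorm : ∀ f : H, ‖Tlin f‖ ^ 2 = ∑' n, ‖⟪f, fseq n⟫‖ ^ 2 := by
      intro f
      have h0 := lp.norm_rpow_eq_tsum (p := 2) (by norm_num) (Tlin f)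
      have h2 : ((2:ℝ≥0∞)).toReal = (2:ℝ) := by norm_num
      rw [h2] at h0
      rw [← Real.rpow_natCast ‖Tlin f‖ 2]
      push_cast
      rw [h0]
      congr 1
      funext n
      rw [hTapp, ← norm_inner_symm]
      norm_cast
    have hTbound : ∀ f : H, ‖Tlin f‖ ≤ Real.sqrt C * ‖f‖ := by
      intro f
      have h1 : ‖Tlin f‖ ^ 2 ≤ C * ‖f‖ ^ 2 := by rw [hTnorm]; exact (hBessel f).2
      have h2 := Real.sqrt_le_sqrt h1
      rwa [Real.sqrt_sq (norm_nonneg _), Real.sqrt_mul hC.le, Real.sqrt_sq (norm_nonneg _)] at h2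
    let T : H →L[ℂ] (lp (fun _ : ℕ => ℂ) 2) := Tlin.mkContinuous (Real.sqrt C) hTbound
    have hTeq : ∀ f, T f = Tlin f := fun f => rfl
    set K := D.topologicalClosure with hKdef
    haveI : CompleteSpace K := (Submodule.isClosed_topologicalClosure D).completeSpace_coe
    have hKineq : ∀ x : K, Real.sqrt A * ‖(x : H)‖ ≤ ‖T (x : H)‖ := by
      have hsub : (D : Set H) ⊆ {f : H | A * ‖f‖ ^ 2 ≤ ‖T f‖ ^ 2} := by
        intro f hf
        rw [Set.mem_setOf_eq, hTeq, hTnorm]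
        exact hD f hf
      have hclosed : IsClosed {f : H | A * ‖f‖ ^ 2 ≤ ‖T f‖ ^ 2} :=
        isClosed_le (continuous_const.mul (continuous_norm.pow 2))
          ((T.continuous.norm).pow 2)
      have hKsub : (K : Set H) ⊆ {f : H | A * ‖f‖ ^ 2 ≤ ‖T f‖ ^ 2} := by
        rw [hKdef, Submodule.topologicalClosure_coe]
        exact closure_minimal hsub hclosed
      intro x
      have hx := hKsub x.2
      rw [Set.mem_setOf_eq] at hx
      have h2 := Real.sqrt_le_sqrt hx
      rwa [Real.sqrt_mul hA.le, Real.sqrt_sq (norm_nonneg _), Real.sqrt_sq (norm_nonneg _)] at h2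
    let T' : K →L[ℂ] lp (fun _ : ℕ => ℂ) 2 := T.comp K.subtypeL
    have hT'x : ∀ x : K, T' x = T (x : H) := fun x => rfl
    have hA' : (0:ℝ) < Real.sqrt A := Real.sqrt_pos.2 hA
    have hanti : AntilipschitzWith ((Real.sqrt A)⁻¹).toNNReal T' := by
      apply T'.antilipschitz_of_bound
      intro x
      rw [Real.coe_toNNReal _ (by positivity)]
      have h := hKineq x
      have hxeq : ‖x‖ = (Real.sqrt A)⁻¹ * (Real.sqrt A * ‖x‖) := by
        field_simp
      rw [hxeq]
      exact mul_le_mul_of_nonneg_left h (by positivity)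
    have hinj : Function.Injective T' := hanti.injective
    have hclr : IsClosed (Set.range T') := hanti.isClosed_range T'.uniformContinuous
    set Rsub := LinearMap.range (T' : K →ₗ[ℂ] lp (fun _ : ℕ => ℂ) 2) with hRdef
    have hRset : (Rsub : Set (lp (fun _ : ℕ => ℂ) 2)) = Set.range T' := by
      ext x
      simp [hRdef, LinearMap.mem_range, Set.mem_range]
    haveI : CompleteSpace Rsub := by
      have hcl : IsClosed (Rsub : Set (lp (fun _ : ℕ => ℂ) 2)) := hRset ▸ hclr
      exact hcl.completeSpace_coe
    let T'' : K →L[ℂ] Rsub := T'.codRestrict Rsub (fun x => LinearMap.mem_range_self _ x)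
    have hT''inj : LinearMap.ker (T'' : K →ₗ[ℂ] Rsub) = ⊥ :=
      LinearMap.ker_eq_bot.mpr (fun x y hxy => hinj (congrArg Subtype.val hxy))
    have hT''surj : LinearMap.range (T'' : K →ₗ[ℂ] Rsub) = ⊤ := by
      refine LinearMap.range_eq_top.mpr ?_
      rintro ⟨y, hy⟩
      obtain ⟨x, hx⟩ := hy
      exact ⟨x, Subtype.ext hx⟩
    let e : K ≃L[ℂ] Rsub := ContinuousLinearEquiv.ofBijective T'' hT''inj hT''surj
    haveI : SecondCountableTopology H := UniformSpace.secondCountable_of_separable H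
    have hKinf : ¬ FiniteDimensional ℂ K := by
      intro hfd
      exact hDinf (FiniteDimensional.of_injective
        (Submodule.inclusion D.le_topologicalClosure) (Submodule.inclusion_injective _))
    have hRinf : ¬ FiniteDimensional ℂ Rsub := by
      intro hfd
      exact hKinf (FiniteDimensional.of_injective (T'' : K →ₗ[ℂ] Rsub)
        (fun x y hxy => hinj (congrArg Subtype.val hxy)))
    obtain ⟨bH⟩ := exists_hb_nat hH
    haveI : SecondCountableTopology (lp (fun _ : ℕ => ℂ) 2) :=
      bH.repr.toHomeomorph.symm.secondCountableTopology
    obtain ⟨bR⟩ := exists_hb_nat hRinf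
    let w : H ≃ₗᵢ[ℂ] Rsub := bH.repr.trans bR.repr.symm
    let V : H →L[ℂ] H := K.subtypeL.comp
      ((e.symm : Rsub →L[ℂ] K).comp (w.toLinearIsometry.toContinuousLinearMap))
    have hVf : ∀ f : H, T (V f) = ((w f : Rsub) : lp (fun _ : ℕ => ℂ) 2) := by
      intro f
      show T ((K.subtypeL) (e.symm (w f))) = _
      have h1 : T ((e.symm (w f) : K) : H) = T' (e.symm (w f)) := rfl
      rw [show T ((K.subtypeL) (e.symm (w f))) = T' (e.symm (w f)) from rfl]
      have h2 : T' (e.symm (w f)) = (T'' (e.symm (w f)) : lp (fun _ : ℕ => ℂ) 2) := rfl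
      rw [h2]
      have h3 : T'' (e.symm (w f)) = e (e.symm (w f)) := rfl
      rw [h3, e.apply_symm_apply]
    have hVnorm : ∀ f : H, ‖T (V f)‖ = ‖f‖ := by
      intro f
      rw [hVf]
      show ‖w f‖ = ‖f‖
      exact w.norm_map f
    refine ⟨ContinuousLinearMap.adjoint V, ?_⟩
    intro f
    have h1 : ∀ n, ‖⟪f, (ContinuousLinearMap.adjoint V) (fseq n)⟫‖ = ‖⟪V f, fseq n⟫‖ := by
      intro n
      rw [← norm_inner_symm, ContinuousLinearMap.adjoint_inner_left, norm_inner_symm]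
    have heq2 : (fun n => ‖⟪f, (ContinuousLinearMap.adjoint V) (fseq n)⟫‖ ^ 2) =
        fun n => ‖⟪V f, fseq n⟫‖ ^ 2 := by
      funext n
      rw [h1]
    have hsummable : Summable (fun n => ‖⟪f, (ContinuousLinearMap.adjoint V) (fseq n)⟫‖ ^ 2) := by
      rw [heq2]
      exact (hBessel (V f)).1
    have htsum2 : ∑' n, ‖⟪f, (ContinuousLinearMap.adjoint V) (fseq n)⟫‖ ^ 2 = ‖f‖ ^ 2 := by
      rw [heq2]
      rw [← hTnorm (V f), ← hTeq, hVnorm]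
    exact (hsummable.hasSum_iff).2 htsum2
end

section
/- Let H be a separable infinite-dimensional complex Hilbert space and let {f_n}_{n=0}^∞ be a sequence in H. Then {f_n} is an SCO sequence (there exists a surjective bounded linear operator B on H such that {B f_n} is an orthonormal basis of H) if and only if there exists an infinite-dimensional closed subspace D ⊆ H such that {P_D f_n}_{n=0}^∞ is a Riesz basis of D, where P_D is the orthogonal projection of H onto D; here a Riesz basis of D means the image of an orthonormal basis of D under a bounded invertible operator on D. -/
open scoped ComplexInnerProductSpace

/-- An orthonormal set in a separable inner product space is countable. -/
lemma aux_orthonormal_countable {E : Type*} [NormedAddCommGroup E] [InnerProductSpace ℂ E]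
    [TopologicalSpace.SeparableSpace E] {w : Set E} (h : Orthonormal ℂ ((↑) : w → E)) :
    w.Countable := by
  have hdist : ∀ x y : w, x ≠ y → (1 : ℝ) ≤ dist (x : E) (y : E) := by
    intro x y hxy
    have hinner : ⟪(x : E), (y : E)⟫ = 0 := h.2 hxy
    have h1 : ‖(x : E) - (y : E)‖ ^ 2 = 2 := by
      have := @norm_sub_sq ℂ E _ _ _ (x : E) (y : E)
      rw [hinner] at this
      simp only [map_zero, mul_zero, sub_zero] at this
      rw [this, h.1 x, h.1 y]
      norm_num
    rw [dist_eq_norm]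
    nlinarith [norm_nonneg ((x : E) - (y : E))]
  have hpair : Pairwise (Function.onFun Disjoint fun x : w => Metric.ball (x : E) (1 / 2)) := by
    intro x y hxy
    apply Metric.ball_disjoint_ball
    have := hdist x y hxy
    linarith
  have : Countable w := hpair.countable_of_isOpen_disjoint
    (fun _ => Metric.isOpen_ball) (fun x => ⟨x, by simp⟩)
  exact Set.countable_coe_iff.mp this

/-- A separable infinite-dimensional complex Hilbert space has an `ℕ`-indexed Hilbert basis. -/
lemma aux_exists_hilbertBasis_nat (E : Type*) [NormedAddCommGroup E] [InnerProductSpace ℂ E]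
    [CompleteSpace E] [TopologicalSpace.SeparableSpace E] (hE : ¬ FiniteDimensional ℂ E) :
    Nonempty (HilbertBasis ℕ ℂ E) := by
  obtain ⟨w, b, hb⟩ := exists_hilbertBasis ℂ E
  have hcount : w.Countable := aux_orthonormal_countable (hb ▸ b.orthonormal)
  have hinf : w.Infinite := by
    rw [Set.infinite_coe_iff.symm]
    by_contra hfin
    rw [not_infinite_iff_finite] at hfin
    apply hE
    have hwfin : w.Finite := Set.toFinite w
    have hspan : (Submodule.span ℂ w).topologicalClosure = ⊤ := by
      have := b.dense_span
      rwa [hb, Subtype.range_coe] at this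
    have hfd : FiniteDimensional ℂ (Submodule.span ℂ w) :=
      FiniteDimensional.span_of_finite ℂ hwfin
    have hclosed : (Submodule.span ℂ w).topologicalClosure = Submodule.span ℂ w :=
      IsClosed.submodule_topologicalClosure_eq (Submodule.span ℂ w).closed_of_finiteDimensional
    rw [hclosed] at hspan
    rw [hspan] at hfd
    exact Module.Finite.equiv (Submodule.topEquiv (R := ℂ) (M := E))
  haveI := hcount.to_subtype
  haveI := hinf.to_subtype
  obtain ⟨g⟩ : Nonempty (ℕ ≃ w) := nonempty_equiv_of_countable
  have hon : Orthonormal ℂ (fun n => b (g n)) := b.orthonormal.comp g g.injective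
  refine ⟨HilbertBasis.mk hon ?_⟩
  have hrange : Set.range (fun n => b (g n)) = Set.range b := by
    rw [show (fun n => b (g n)) = b ∘ g from rfl, Set.range_comp, g.surjective.range_eq,
      Set.image_univ]
  rw [hrange, b.dense_span]

/-- `{f_n}` is an SCO sequence (some surjective bounded operator maps it to an
orthonormal basis of `H`) iff there exists an infinite-dimensional closed subspace `D ⊆ H`
such that `{P_D f_n}` is a Riesz basis of `D`, i.e. the image of an orthonormal basis of `D`
under a bounded invertible operator on `D`. -/
theorem stmt9 {H : Type*} [NormedAddCommGroup H] [InnerProductSpace ℂ H]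
    [CompleteSpace H] [TopologicalSpace.SeparableSpace H]
    (hH : ¬ FiniteDimensional ℂ H) (fseq : ℕ → H) :
    (∃ B : H →L[ℂ] H, Function.Surjective B ∧
        Orthonormal ℂ (fun n => B (fseq n)) ∧
        (Submodule.span ℂ (Set.range fun n => B (fseq n))).topologicalClosure = ⊤) ↔
      ∃ (D : Submodule ℂ H) (hD : IsClosed (D : Set H)), ¬ FiniteDimensional ℂ D ∧
        (letI : CompleteSpace D := hD.completeSpace_coe
         ∃ (e : HilbertBasis ℕ ℂ D) (T : D ≃L[ℂ] D),
            ∀ n : ℕ, (D.orthogonalProjection (fseq n) : D) = T (e n)) := by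
  constructor
  · rintro ⟨B, hsurj, hon, hdense⟩
    set K : Submodule ℂ H := LinearMap.ker (B : H →ₗ[ℂ] H) with hK
    have hKc : IsClosed (K : Set H) := ContinuousLinearMap.isClosed_ker B
    haveI : CompleteSpace K := hKc.completeSpace_coe
    set D : Submodule ℂ H := Kᗮ with hDdef
    have hD : IsClosed (D : Set H) := K.isClosed_orthogonal
    haveI : CompleteSpace D := hD.completeSpace_coe
    have hDperp : Dᗮ = K := K.orthogonal_orthogonal
    have key : ∀ v : H, B ((D.orthogonalProjection v : D) : H) = B v := by
      intro v
      have hmem : v - (D.orthogonalProjection v : D) ∈ Dᗮ :=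
        D.sub_starProjection_mem_orthogonal v
      rw [hDperp] at hmem
      have : B (v - (D.orthogonalProjection v : D)) = 0 := hmem
      rw [map_sub, sub_eq_zero] at this
      exact this.symm
    set f : D →L[ℂ] H := B.comp D.subtypeL with hf
    have hker : f.ker = ⊥ := by
      rw [Submodule.eq_bot_iff]
      rintro ⟨x, hx⟩ hfx
      have hxK : x ∈ K := hfx
      have : x = 0 := by
        have := (Submodule.orthogonal_disjoint K).le_bot ⟨hxK, hx⟩
        simpa using this
      simpa using this
    have hrange : f.range = ⊤ := by
      rw [Submodule.eq_top_iff']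
      intro y
      obtain ⟨x, hx⟩ := hsurj y
      exact ⟨D.orthogonalProjection x, by rw [← hx]; exact key x⟩
    set S : D ≃L[ℂ] H := ContinuousLinearEquiv.ofBijective f hker hrange with hS
    have hSapp : ∀ d : D, S d = B (d : H) := fun d => rfl
    refine ⟨D, hD, ?_, ?_⟩
    · intro hfd
      exact hH (Module.Finite.equiv S.toLinearEquiv)
    · haveI : TopologicalSpace.SeparableSpace D := by infer_instance
      have hDfd : ¬ FiniteDimensional ℂ D := by
        intro hfd
        exact hH (Module.Finite.equiv S.toLinearEquiv)
      obtain ⟨eD⟩ := aux_exists_hilbertBasis_nat D hDfd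
      set ε : HilbertBasis ℕ ℂ H := HilbertBasis.mk hon (le_of_eq hdense.symm) with hε
      have hεapp : ∀ n, ε n = B (fseq n) := fun n =>
        congrFun (HilbertBasis.coe_mk hon (le_of_eq hdense.symm)) n
      set V : D ≃ₗᵢ[ℂ] H := eD.repr.trans ε.repr.symm with hV
      have hVapp : ∀ n, V (eD n) = ε n := by
        intro n
        classical
        simp only [hV, LinearIsometryEquiv.trans_apply, eD.repr_self]
        exact ε.repr_symm_single n
      refine ⟨eD, V.toContinuousLinearEquiv.trans S.symm, fun n => ?_⟩
      have h1 : S ((D.orthogonalProjection (fseq n) : D)) = B (fseq n) := by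
        rw [hSapp]; exact key (fseq n)
      have h2 : (V.toContinuousLinearEquiv.trans S.symm) (eD n) = S.symm (ε n) := by
        simp only [ContinuousLinearEquiv.trans_apply,
          LinearIsometryEquiv.coe_toContinuousLinearEquiv, hVapp]
      rw [h2, ← hεapp n, ← h1] at *
      exact (S.symm_apply_apply _).symm
  · rintro ⟨D, hD, hDfd, e, T, hT⟩
    haveI : CompleteSpace D := hD.completeSpace_coe
    obtain ⟨eH⟩ := aux_exists_hilbertBasis_nat H hH
    set W : D ≃ₗᵢ[ℂ] H := e.repr.trans eH.repr.symm with hW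
    have hWapp : ∀ n, W (e n) = eH n := by
      intro n
      classical
      simp only [hW, LinearIsometryEquiv.trans_apply, e.repr_self]
      exact eH.repr_symm_single n
    set B : H →L[ℂ] H :=
      (W.toContinuousLinearEquiv : D →L[ℂ] H).comp
        (((T.symm : D ≃L[ℂ] D) : D →L[ℂ] D).comp (D.orthogonalProjection)) with hB
    have hBapp : ∀ n, B (fseq n) = eH n := by
      intro n
      simp only [hB, ContinuousLinearMap.comp_apply, ContinuousLinearEquiv.coe_coe]
      rw [hT n, T.symm_apply_apply]
      exact hWapp n
    refine ⟨B, ?_, ?_, ?_⟩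
    · intro y
      refine ⟨(T (W.symm y) : D), ?_⟩
      simp only [hB, ContinuousLinearMap.comp_apply, ContinuousLinearEquiv.coe_coe]
      rw [Submodule.orthogonalProjection_mem_subspace_eq_self, T.symm_apply_apply]
      simp
    · have : (fun n => B (fseq n)) = fun n => eH n := funext hBapp
      rw [this]
      exact eH.orthonormal
    · have : (Set.range fun n => B (fseq n)) = Set.range eH := by
        rw [funext hBapp]
      rw [this, eH.dense_span]
end
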